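/- The number of F_{q^2}-rational points of the Hermitian variety in PG(k-1, q^2) defined by X_1^{q+1} + ⋯ + X_k^{q+1} = 0 equals (q^k - (-1)^k)(q^{k-1} - (-1)^{k-1})/(q^2 - 1), for k ≥ 2. -/

import Mathlib

open Finset Polynomial

namespace Stmt16

open scoped Classical

variable {K : Type*} [Field K] [Fintype K] {q : ℕ}

noncomputable def Fq (K : Type*) [Field K] [Fintype K] (q : ℕ) : Finset K :=
  univ.filter fun c => c ^ q = c

lemma mem_Fq {c : K} : c ∈ Fq K q ↔ c ^ q = c := by simp [Fq]

noncomputable def fibCount (q : ℕ) (c : K) : ℕ :=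
  (univ.filter fun x : K => x ^ (q + 1) = c).card

noncomputable def Ncount (q k : ℕ) (c : K) : ℕ :=
  (univ.filter fun x : Fin k → K => ∑ i, x i ^ (q + 1) = c).card

section
variable (hq : Fintype.card K = q ^ 2)
include hq

lemma hq2 : 2 ≤ q := by
  have h := Fintype.one_lt_card (α := K)
  rw [hq] at h
  by_contra hcon
  push_neg at hcon
  interval_cases q <;> simp_all

lemma pow_card2 (x : K) : x ^ q ^ 2 = x := hq ▸ FiniteField.pow_card x

lemma frobHom : ∃ φ : K →+* K, ∀ x : K, φ x = x ^ q := by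
  set p := ringChar K with hp'
  haveI : CharP K p := ringChar.charP K
  have hp : p.Prime := CharP.char_is_prime K p
  obtain ⟨n, -, hc⟩ := FiniteField.card (K := K) p
  have hdvd : q ∣ p ^ (n : ℕ) := by
    rw [← hc, hq]; exact dvd_pow_self q (by norm_num)
  obtain ⟨m, -, rfl⟩ := (Nat.dvd_prime_pow hp).mp hdvd
  haveI : ExpChar K p := ExpChar.prime hp
  exact ⟨iterateFrobenius K p m, fun x => iterateFrobenius_def p m x⟩

lemma norm_mem_Fq (x : K) : x ^ (q + 1) ∈ Fq K q := by
  rw [mem_Fq, ← pow_mul]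
  have h : (q + 1) * q = q ^ 2 + q := by ring
  rw [h, pow_add, pow_card2 hq, ← pow_succ']

lemma zero_mem_Fq : (0 : K) ∈ Fq K q := by
  rw [mem_Fq]; exact zero_pow (by have := hq2 hq; omega)

lemma sub_mem_Fq {c d : K} (hc : c ∈ Fq K q) (hd : d ∈ Fq K q) : c - d ∈ Fq K q := by
  obtain ⟨φ, hφ⟩ := frobHom hq
  rw [mem_Fq] at *
  rw [← hφ, map_sub, hφ, hφ, hc, hd]

lemma neg_mem_Fq {c : K} (hc : c ∈ Fq K q) : -c ∈ Fq K q := by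
  have := sub_mem_Fq hq (zero_mem_Fq hq) hc
  simpa using this

lemma sum_norm_mem_Fq {k : ℕ} (x : Fin k → K) : (∑ i, x i ^ (q + 1)) ∈ Fq K q := by
  obtain ⟨φ, hφ⟩ := frobHom hq
  rw [mem_Fq, ← hφ, map_sum]
  exact Finset.sum_congr rfl fun i _ => by rw [hφ]; exact mem_Fq.mp (norm_mem_Fq hq (x i))

lemma card_Fq_le : (Fq K q).card ≤ q := by
  have h2 := hq2 hq
  have hdeg : (X ^ q - X : K[X]).natDegree = q := by
    rw [Polynomial.natDegree_sub_eq_left_of_natDegree_lt] <;>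
      simp [Polynomial.natDegree_X_pow] <;> omega
  have hne : (X ^ q - X : K[X]) ≠ 0 := by
    intro h; rw [h] at hdeg; simp at hdeg; omega
  have hsub : Fq K q ⊆ ((X ^ q - X : K[X]).roots).toFinset := by
    intro c hc
    rw [Multiset.mem_toFinset, mem_roots hne]
    simp [IsRoot, mem_Fq.mp hc, sub_eq_zero]
  refine le_trans (Finset.card_le_card hsub) ?_
  refine le_trans (Multiset.toFinset_card_le _) ?_
  refine le_trans (Polynomial.card_roots' _) ?_
  rw [hdeg]

lemma fibCount_zero : fibCount q (0 : K) = 1 := by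
  have h2 := hq2 hq
  rw [fibCount]
  rw [show (univ.filter fun x : K => x ^ (q+1) = 0) = {0} from ?_]
  · simp
  · ext x; simp [pow_eq_zero_iff]

lemma fibCount_le (c : K) : fibCount q c ≤ q + 1 := by
  have hne : (X ^ (q+1) - C c : K[X]) ≠ 0 := by
    intro h
    have h2 : (X ^ (q+1) - C c : K[X]).natDegree = q + 1 := natDegree_X_pow_sub_C
    rw [h] at h2; simp at h2
  have hsub : (univ.filter fun x : K => x ^ (q+1) = c) ⊆
      ((X ^ (q+1) - C c : K[X]).roots).toFinset := by
    intro x hx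
    simp only [mem_filter, mem_univ, true_and] at hx
    rw [Multiset.mem_toFinset, mem_roots hne]
    simp [IsRoot, hx, sub_eq_zero]
  refine le_trans (Finset.card_le_card hsub) ?_
  refine le_trans (Multiset.toFinset_card_le _) ?_
  refine le_trans (Polynomial.card_roots' _) ?_
  rw [natDegree_X_pow_sub_C]

lemma sum_fib : ∑ c ∈ (Fq K q).erase 0, fibCount q c = q ^ 2 - 1 := by
  have h2 := hq2 hq
  have key : (univ.filter fun x : K => x ≠ 0).card
      = ∑ c ∈ (Fq K q).erase 0, ((univ.filter fun x : K => x ≠ 0).filter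
          fun x => x ^ (q+1) = c).card := by
    apply Finset.card_eq_sum_card_fiberwise
    intro x hx
    replace hx : x ≠ 0 := by simpa using hx
    rw [Finset.mem_coe, Finset.mem_erase]
    exact ⟨pow_ne_zero _ hx, norm_mem_Fq hq x⟩
  have hcard : (univ.filter fun x : K => x ≠ 0).card = q ^ 2 - 1 := by
    rw [Finset.filter_ne']
    rw [Finset.card_erase_of_mem (mem_univ _), Finset.card_univ, hq]
  rw [hcard] at key
  rw [key]
  apply Finset.sum_congr rfl
  intro c hc
  rw [Finset.mem_erase] at hc
  rw [fibCount]
  congr 1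
  ext x
  simp only [mem_filter, mem_univ, true_and]
  constructor
  · intro h
    refine ⟨?_, h⟩
    rintro rfl
    exact hc.1 (by simpa using h.symm)
  · rintro ⟨-, h⟩; exact h

lemma card_Fq_erase : ((Fq K q).erase 0).card = q - 1 := by
  have h2 := hq2 hq
  have hle : ((Fq K q).erase 0).card ≤ q - 1 := by
    have := Finset.card_erase_of_mem (zero_mem_Fq hq)
    rw [this]
    have := card_Fq_le hq
    omega
  have hge : q ^ 2 - 1 ≤ ((Fq K q).erase 0).card * (q + 1) := by
    rw [← sum_fib hq]
    calc ∑ c ∈ (Fq K q).erase 0, fibCount q c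
        ≤ ∑ _c ∈ (Fq K q).erase 0, (q + 1) := Finset.sum_le_sum fun c _ => fibCount_le hq c
      _ = ((Fq K q).erase 0).card * (q + 1) := by rw [Finset.sum_const, smul_eq_mul]
  zify [show 1 ≤ q by omega, show 1 ≤ q ^ 2 by nlinarith] at hle hge ⊢
  nlinarith [hle, hge]

lemma fibCount_eq {c : K} (hc : c ∈ (Fq K q).erase 0) : fibCount q c = q + 1 := by
  have h2 := hq2 hq
  by_contra hne
  have hlt : fibCount q c < q + 1 := lt_of_le_of_ne (fibCount_le hq c) hne
  have : ∑ d ∈ (Fq K q).erase 0, fibCount q d < ∑ _d ∈ (Fq K q).erase 0, (q + 1) :=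
    Finset.sum_lt_sum (fun d _ => fibCount_le hq d) ⟨c, hc, hlt⟩
  rw [sum_fib hq, Finset.sum_const, smul_eq_mul, card_Fq_erase hq] at this
  zify [show 1 ≤ q by omega, show 1 ≤ q ^ 2 by nlinarith] at this
  nlinarith [this]

lemma reindex (g : K → ℤ) :
    ∑ t : K, g (t ^ (q + 1)) = g 0 + (q + 1) * ∑ c ∈ (Fq K q).erase 0, g c := by
  have key : ∑ c ∈ Fq K q, ∑ t ∈ univ.filter (fun t : K => t ^ (q+1) = c), g (t ^ (q+1))
      = ∑ t : K, g (t ^ (q + 1)) :=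
    Finset.sum_fiberwise_of_maps_to (fun x _ => norm_mem_Fq hq x) _
  have inner : ∀ c : K, ∑ t ∈ univ.filter (fun t : K => t ^ (q+1) = c), g (t ^ (q+1))
      = (fibCount q c : ℤ) * g c := by
    intro c
    rw [Finset.sum_congr rfl (fun t ht => by rw [(mem_filter.mp ht).2] : ∀ t ∈ _, g (t^(q+1)) = g c),
      Finset.sum_const, fibCount, nsmul_eq_mul]
  rw [← key, Finset.sum_congr rfl fun c _ => inner c,
    ← Finset.insert_erase (zero_mem_Fq hq), Finset.sum_insert (Finset.notMem_erase _ _),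
    fibCount_zero hq, Finset.mul_sum]
  push_cast
  rw [Finset.sum_congr rfl fun c hc => by rw [fibCount_eq hq hc]]
  rw [Finset.erase_insert (Finset.notMem_erase _ _)]
  push_cast
  rw [one_mul]

lemma Ncount_one (c : K) : Ncount q 1 c = fibCount q c := by
  rw [Ncount, fibCount, ← Fintype.card_subtype, ← Fintype.card_subtype]
  exact Fintype.card_congr <| Equiv.subtypeEquiv (Equiv.funUnique (Fin 1) K)
    fun x => by simp [Equiv.funUnique, Fin.sum_univ_one]

omit hq in
lemma Ncount_succ (k : ℕ) (c : K) :
    Ncount q (k + 1) c = ∑ t : K, Ncount q k (c - t ^ (q + 1)) := by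
  have e : {x : Fin (k+1) → K // ∑ i, x i ^ (q + 1) = c} ≃
      Σ t : K, {y : Fin k → K // ∑ i, y i ^ (q + 1) = c - t ^ (q + 1)} :=
    { toFun := fun x => ⟨x.1 (Fin.last k), ⟨Fin.init x.1, by
        have h := x.2
        rw [Fin.sum_univ_castSucc] at h
        exact eq_sub_of_add_eq h⟩⟩
      invFun := fun p => ⟨Fin.snoc p.2.1 p.1, by
        rw [Fin.sum_univ_castSucc]
        simp only [Fin.snoc_castSucc, Fin.snoc_last]
        rw [p.2.2]; ring⟩
      left_inv := fun x => by
        ext i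
        exact congrFun (Fin.snoc_init_self x.1) i
      right_inv := fun p => by
        refine Sigma.ext (by simp) ?_
        refine (Subtype.heq_iff_coe_eq ?_).mpr ?_
        · intro y; simp
        · simp [Fin.init_snoc] }
  calc Ncount q (k+1) c = Fintype.card {x : Fin (k+1) → K // ∑ i, x i ^ (q + 1) = c} := by
        rw [Ncount, Fintype.card_subtype]
    _ = Fintype.card (Σ t : K, {y : Fin k → K // ∑ i, y i ^ (q + 1) = c - t ^ (q + 1)}) :=
        Fintype.card_congr e
    _ = ∑ t : K, Ncount q k (c - t ^ (q + 1)) := by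
        rw [Fintype.card_sigma]
        exact Finset.sum_congr rfl fun t _ => by rw [Ncount, Fintype.card_subtype]

lemma Ncount_rec (k : ℕ) (c : K) :
    (Ncount q (k + 1) c : ℤ) = Ncount q k c
      + (q + 1) * ∑ s ∈ (Fq K q).erase 0, (Ncount q k (c - s) : ℤ) := by
  have h := reindex hq (fun t => (Ncount q k (c - t) : ℤ))
  simp only [sub_zero] at h
  rw [Ncount_succ, Nat.cast_sum, h]

lemma neg_mem_erase {s : K} (hs : s ∈ (Fq K q).erase 0) : -s ∈ (Fq K q).erase 0 := by
  rw [Finset.mem_erase] at hs ⊢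
  exact ⟨neg_ne_zero.mpr hs.1, neg_mem_Fq hq hs.2⟩

lemma formula (m : ℕ) :
    ((Ncount q (m + 1) (0 : K) : ℤ)
        = (q : ℤ) ^ (2 * m + 1) + (-1) ^ (m + 1) * ((q : ℤ) - 1) * (q : ℤ) ^ m)
      ∧ ∀ c ∈ (Fq K q).erase 0,
        (Ncount q (m + 1) c : ℤ) = (q : ℤ) ^ (2 * m + 1) - (-1) ^ (m + 1) * (q : ℤ) ^ m := by
  have h2 := hq2 hq
  induction m with
  | zero =>
    constructor
    · rw [Ncount_one hq, fibCount_zero hq]; push_cast; ring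
    · intro c hc; rw [Ncount_one hq, fibCount_eq hq hc]; push_cast; ring
  | succ m ih =>
    obtain ⟨hA, hB⟩ := ih
    have hcardE : (((Fq K q).erase 0).card : ℤ) = (q : ℤ) - 1 := by
      rw [card_Fq_erase hq]; push_cast [Nat.cast_sub (by omega : 1 ≤ q)]; ring
    have e1 : (q : ℤ) ^ (2 * (m + 1) + 1) = (q : ℤ) ^ (2 * m + 1) * q ^ 2 := by
      have h : 2 * (m + 1) + 1 = (2 * m + 1) + 2 := by omega
      rw [h, pow_add]
    have e2 : (-1 : ℤ) ^ (m + 1 + 1) = (-1) ^ (m + 1) * (-1) := pow_succ _ _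
    have e3 : (q : ℤ) ^ (m + 1) = (q : ℤ) ^ m * q := pow_succ _ _
    constructor
    · rw [Ncount_rec hq, hA]
      have hsum : ∑ s ∈ (Fq K q).erase 0, (Ncount q (m + 1) ((0 : K) - s) : ℤ)
          = ((q : ℤ) - 1) * ((q : ℤ) ^ (2 * m + 1) - (-1) ^ (m + 1) * (q : ℤ) ^ m) := by
        have hconst : ∀ s ∈ (Fq K q).erase 0, (Ncount q (m + 1) ((0 : K) - s) : ℤ)
            = (q : ℤ) ^ (2 * m + 1) - (-1) ^ (m + 1) * (q : ℤ) ^ m := by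
          intro s hs
          rw [zero_sub]; exact hB (-s) (neg_mem_erase hq hs)
        rw [Finset.sum_congr rfl hconst, Finset.sum_const, nsmul_eq_mul, hcardE]
      rw [hsum, e1, e2, e3]
      ring
    · intro c hc
      have hcF : c ∈ Fq K q := Finset.mem_of_mem_erase hc
      have hc0 : c ≠ 0 := (Finset.mem_erase.mp hc).1
      rw [Ncount_rec hq, hB c hc]
      have hsum : ∑ s ∈ (Fq K q).erase 0, (Ncount q (m + 1) (c - s) : ℤ)
          = ((q : ℤ) ^ (2 * m + 1) + (-1) ^ (m + 1) * ((q : ℤ) - 1) * (q : ℤ) ^ m)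
            + ((q : ℤ) - 2) * ((q : ℤ) ^ (2 * m + 1) - (-1) ^ (m + 1) * (q : ℤ) ^ m) := by
        rw [← Finset.insert_erase hc, Finset.sum_insert (Finset.notMem_erase _ _), sub_self, hA]
        congr 1
        have : ∀ s ∈ ((Fq K q).erase 0).erase c,
            (Ncount q (m + 1) (c - s) : ℤ)
              = (q : ℤ) ^ (2 * m + 1) - (-1) ^ (m + 1) * (q : ℤ) ^ m := by
          intro s hs
          have hs' := Finset.mem_of_mem_erase hs
          refine hB _ (Finset.mem_erase.mpr ⟨?_, ?_⟩)
          · exact sub_ne_zero_of_ne fun h => (Finset.mem_erase.mp hs).1 h.symm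
          · exact sub_mem_Fq hq hcF (Finset.mem_of_mem_erase hs')
        rw [Finset.sum_congr rfl this, Finset.sum_const, nsmul_eq_mul,
          Finset.card_erase_of_mem hc, card_Fq_erase hq]
        push_cast [Nat.cast_sub (by omega : 1 ≤ q - 1), Nat.cast_sub (by omega : 1 ≤ q)]
        ring
      rw [hsum, e1, e2, e3]
      ring


omit hq in
lemma smul_sum_zero_iff {k : ℕ} (c : Kˣ) (v : Fin k → K) :
    ∑ i, ((c : K) • v) i ^ (q + 1) = 0 ↔ ∑ i, v i ^ (q + 1) = 0 := by
  have h : ∑ i, ((c : K) • v) i ^ (q + 1) = (c : K) ^ (q + 1) * ∑ i, v i ^ (q + 1) := by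
    rw [Finset.mul_sum]
    exact Finset.sum_congr rfl fun i _ => by rw [Pi.smul_apply, smul_eq_mul, mul_pow]
  rw [h, mul_eq_zero]
  constructor
  · rintro (h0 | h0)
    · exact absurd h0 (pow_ne_zero _ c.ne_zero)
    · exact h0
  · exact fun h0 => Or.inr h0

lemma proj_count {k : ℕ} (hk : 1 ≤ k) :
    Ncount q k (0 : K)
      = 1 + (q ^ 2 - 1) *
        ({p : Projectivization K (Fin k → K) | ∑ i, (p.rep i) ^ (q + 1) = 0}).ncard := by
  classical
  set S : Set (Projectivization K (Fin k → K)) :=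
    {p | ∑ i, (p.rep i) ^ (q + 1) = 0} with hS
  have hrep : ∀ (v : Fin k → K) (hv : v ≠ 0),
      (Projectivization.mk K v hv ∈ S ↔ ∑ i, v i ^ (q + 1) = 0) := by
    intro v hv
    obtain ⟨a, ha⟩ := Projectivization.exists_smul_eq_mk_rep K v hv
    have ha' : (Projectivization.mk K v hv).rep = (a : K) • v := by
      rw [← ha, Units.smul_def]
    rw [hS]
    simp only [Set.mem_setOf_eq]
    rw [ha']
    exact smul_sum_zero_iff a v
  have hbij : Nat.card ↥{v : Fin k → K | v ≠ 0 ∧ ∑ i, v i ^ (q + 1) = 0}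
      = Nat.card (↥S × Kˣ) := by
    refine Nat.card_congr (Equiv.symm (Equiv.ofBijective
      (fun pa : ↥S × Kˣ =>
        (⟨(pa.2 : K) • pa.1.1.rep,
          smul_ne_zero pa.2.ne_zero (Projectivization.rep_nonzero _),
          (smul_sum_zero_iff pa.2 _).mpr pa.1.2⟩ :
        ↥{v : Fin k → K | v ≠ 0 ∧ ∑ i, v i ^ (q + 1) = 0})) ⟨?_, ?_⟩))
    · rintro ⟨⟨p, hp⟩, a⟩ ⟨⟨p', hp'⟩, a'⟩ heq
      simp only [Subtype.mk.injEq] at heq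
      have hpp : p = p' := by
        rw [← Projectivization.mk_rep p, ← Projectivization.mk_rep p',
          Projectivization.mk_eq_mk_iff]
        refine ⟨a⁻¹ * a', ?_⟩
        rw [mul_smul, Units.smul_def a', ← heq, ← Units.smul_def a, ← mul_smul,
          inv_mul_cancel, one_smul]
      subst hpp
      have haa : a = a' := by
        obtain ⟨j, hj⟩ := Function.ne_iff.mp (Projectivization.rep_nonzero p)
        have h2 := congrFun heq j
        simp only [Pi.smul_apply, smul_eq_mul] at h2
        exact Units.ext (mul_right_cancel₀ (by simpa using hj) h2)
      subst haa
      rfl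
    · rintro ⟨v, hv0, hvP⟩
      obtain ⟨a, ha⟩ := Projectivization.exists_smul_eq_mk_rep K v hv0
      refine ⟨⟨⟨Projectivization.mk K v hv0, (hrep v hv0).mpr hvP⟩, a⁻¹⟩, ?_⟩
      apply Subtype.ext
      show ((a⁻¹ : Kˣ) : K) • (Projectivization.mk K v hv0).rep = v
      rw [← ha, ← Units.smul_def, ← mul_smul, inv_mul_cancel, one_smul]
  have hfin : {v : Fin k → K | v ≠ 0 ∧ ∑ i, v i ^ (q + 1) = 0}
      = ↑(((univ : Finset (Fin k → K)).filter
          fun v => ∑ i, v i ^ (q + 1) = 0).erase 0) := by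
    ext v
    simp only [Set.mem_setOf_eq, Finset.coe_erase, Set.mem_diff, Finset.mem_coe,
      Finset.mem_filter, Finset.mem_univ, true_and, Set.mem_singleton_iff]
    tauto
  have hzero : (0 : Fin k → K) ∈ (univ : Finset (Fin k → K)).filter
      fun v => ∑ i, v i ^ (q + 1) = 0 := by
    simp
  have hL : Nat.card ↥{v : Fin k → K | v ≠ 0 ∧ ∑ i, v i ^ (q + 1) = 0}
      = Ncount q k (0 : K) - 1 := by
    rw [Nat.card_coe_set_eq, hfin, Set.ncard_coe_finset,
      Finset.card_erase_of_mem hzero, Ncount]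
  have hR : Nat.card (↥S × Kˣ) = S.ncard * (q ^ 2 - 1) := by
    rw [Nat.card_prod, Nat.card_coe_set_eq, Nat.card_eq_fintype_card,
      Fintype.card_units, hq]
  have h1 : Ncount q k (0 : K) - 1 = S.ncard * (q ^ 2 - 1) := by rw [← hL, hbij, hR]
  have h2 : 1 ≤ Ncount q k (0 : K) := by
    rw [Ncount]
    refine Finset.card_pos.mpr ⟨0, ?_⟩
    simp [zero_pow]
  rw [← Nat.sub_add_cancel h2, h1, mul_comm]
  exact Nat.add_comm _ 1

end
end Stmt16

/-- The number of points of the Hermitian variety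
`X_1^{q+1} + ⋯ + X_k^{q+1} = 0` in `PG(k-1, q²)` equals
`(q^k - (-1)^k)(q^{k-1} - (-1)^{k-1})/(q² - 1)`, for `k ≥ 2`. -/
theorem stmt_16 {K : Type*} [Field K] [Fintype K] {q k : ℕ}
    (hq : Fintype.card K = q ^ 2) (hk : 2 ≤ k) :
    (({p : Projectivization K (Fin k → K) |
        ∑ i, (p.rep i) ^ (q + 1) = 0}).ncard : ℚ) =
      ((q : ℚ) ^ k - (-1 : ℚ) ^ k) * ((q : ℚ) ^ (k - 1) - (-1 : ℚ) ^ (k - 1)) /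
        ((q : ℚ) ^ 2 - 1) := by
  obtain ⟨j, rfl⟩ : ∃ j, k = j + 2 := ⟨k - 2, by omega⟩
  have h2 := Stmt16.hq2 hq
  have hA := (Stmt16.formula hq (j + 1)).1
  have hP := Stmt16.proj_count hq (q := q) (k := j + 2) (by omega)
  set N := ({p : Projectivization K (Fin (j + 2) → K) |
      ∑ i, (p.rep i) ^ (q + 1) = 0}).ncard with hN
  have hq4 : (1 : ℕ) ≤ q ^ 2 := by nlinarith
  have hPQ : (Stmt16.Ncount q (j + 2) (0 : K) : ℚ) = 1 + ((q : ℚ) ^ 2 - 1) * N := by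
    rw [hP]
    push_cast [Nat.cast_sub hq4]
    ring
  have hAQ : (Stmt16.Ncount q (j + 2) (0 : K) : ℚ)
      = (q : ℚ) ^ (2 * (j + 1) + 1)
        + (-1 : ℚ) ^ (j + 1 + 1) * ((q : ℚ) - 1) * (q : ℚ) ^ (j + 1) := by
    have := congrArg (fun z : ℤ => (z : ℚ)) hA
    push_cast at this
    exact_mod_cast this
  have hcomb : 1 + ((q : ℚ) ^ 2 - 1) * N
      = (q : ℚ) ^ (2 * (j + 1) + 1)
        + (-1 : ℚ) ^ (j + 1 + 1) * ((q : ℚ) - 1) * (q : ℚ) ^ (j + 1) :=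
    hPQ.symm.trans hAQ
  have hne : ((q : ℚ) ^ 2 - 1) ≠ 0 := by
    have : (2 : ℚ) ≤ (q : ℚ) := by exact_mod_cast h2
    nlinarith
  have hε2 : ((-1 : ℚ) ^ j) ^ 2 = 1 := by
    rcases neg_one_pow_eq_or ℚ j with h | h <;> rw [h] <;> norm_num
  show (N : ℚ) = ((q : ℚ) ^ (j + 2) - (-1 : ℚ) ^ (j + 2))
      * ((q : ℚ) ^ (j + 2 - 1) - (-1 : ℚ) ^ (j + 2 - 1)) / ((q : ℚ) ^ 2 - 1)
  rw [show j + 2 - 1 = j + 1 from rfl, eq_div_iff hne]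
  have e1 : (q : ℚ) ^ (2 * (j + 1) + 1) = ((q : ℚ) ^ j) ^ 2 * (q : ℚ) ^ 3 := by
    rw [← pow_mul, ← pow_add]
    congr 1
    omega
  have e2 : (q : ℚ) ^ (j + 2) = (q : ℚ) ^ j * (q : ℚ) ^ 2 := pow_add _ _ _
  have e3 : (q : ℚ) ^ (j + 1) = (q : ℚ) ^ j * (q : ℚ) := by rw [pow_succ]
  have e4 : (-1 : ℚ) ^ (j + 2) = (-1 : ℚ) ^ j := by
    rw [pow_add]; norm_num
  have e5 : (-1 : ℚ) ^ (j + 1 + 1) = (-1 : ℚ) ^ j := by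
    rw [show j + 1 + 1 = j + 2 from rfl, pow_add]; norm_num
  have e6 : (-1 : ℚ) ^ (j + 1) = -(-1 : ℚ) ^ j := by rw [pow_succ]; ring
  rw [e1, e5] at hcomb
  rw [e2, e3, e4, e6]
  linear_combination hcomb + hε2
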